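/- Let q > 1, H a subgroup of the group of Dirichlet characters modulo q, χ₁ a Dirichlet character modulo q, and a an integer coprime to q with multiplicative inverse ā mod q. Then ∑_{χ ∈ χ₁H} τ(χ)·χ(a) = χ₁(a)·#H·∑_{h ∈ ker H} χ₁(h·ā)·e(h·ā/q), where τ(χ) = ∑_{b mod q} χ(b)·e(b/q) is the Gauss sum and e(x) = exp(2πi x). -/
import Mathlib

open scoped Classical

open Finset Complex

noncomputable def e (x : ℝ) : ℂ := Complex.exp (2 * Real.pi * Complex.I * x)

/-- Gauss sum of a Dirichlet character mod `q`. -/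
noncomputable def gaussSum' (q : ℕ) [NeZero q] (χ : DirichletCharacter ℂ q) : ℂ :=
  ∑ b : ZMod q, χ b * e ((b.val : ℝ) / q)

lemma sum_eq_sum_units {q : ℕ} [NeZero q] (f : ZMod q → ℂ)
    (hf : ∀ b : ZMod q, ¬ IsUnit b → f b = 0) :
    ∑ b : ZMod q, f b = ∑ u : (ZMod q)ˣ, f u := by
  classical
  rw [← Finset.sum_image (f := f) (g := fun u : (ZMod q)ˣ => (u : ZMod q))
        (fun x _ y _ h => Units.ext h)]
  refine (Finset.sum_subset (Finset.subset_univ _) ?_).symm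
  intro b _ hb
  apply hf
  intro hu
  exact hb (Finset.mem_image.2 ⟨hu.unit, Finset.mem_univ _, rfl⟩)

lemma sum_subgroup_eval (q : ℕ) [NeZero q] (H : Subgroup (DirichletCharacter ℂ q)) [Fintype H]
    (u : (ZMod q)ˣ) :
    ∑ χ : H, (χ : DirichletCharacter ℂ q) (u : ZMod q) =
      if ∀ χ ∈ H, χ (u : ZMod q) = 1 then (Nat.card H : ℂ) else 0 := by
  split_ifs with h
  · have : ∀ χ : H, (χ : DirichletCharacter ℂ q) (u : ZMod q) = 1 := fun χ => h χ.1 χ.2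
    rw [Finset.sum_congr rfl (fun χ _ => this χ)]
    simp [Nat.card_eq_fintype_card]
  · push_neg at h
    obtain ⟨χ₀, hχ₀, hne⟩ := h
    have key : χ₀ (u : ZMod q) * ∑ χ : H, (χ : DirichletCharacter ℂ q) u =
        ∑ χ : H, (χ : DirichletCharacter ℂ q) u := by
      rw [Finset.mul_sum]
      exact Fintype.sum_equiv (Equiv.mulLeft (⟨χ₀, hχ₀⟩ : H)) _ _ (fun χ => by
        simp)
    have : (χ₀ u - 1) * ∑ χ : H, (χ : DirichletCharacter ℂ q) u = 0 := by
      rw [sub_mul, one_mul, key, sub_self]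
    rcases mul_eq_zero.1 this with h0 | h0
    · exact absurd (by linear_combination h0) hne
    · exact h0

/-- Lemma on dual sums: `∑_{χ ∈ χ₁H} τ(χ)·χ(a) = χ₁(a)·#H·∑_{h ∈ ker H} χ₁(h·ā)·e(h·ā/q)`. -/
theorem dual_orthogonality (q : ℕ) [NeZero q] (hq : 1 < q)
    (H : Subgroup (DirichletCharacter ℂ q)) [Fintype H]
    (χ₁ : DirichletCharacter ℂ q) (a : (ZMod q)ˣ) :
    ∑ χ : H, gaussSum' q (χ₁ * (χ : DirichletCharacter ℂ q)) *
        (χ₁ * (χ : DirichletCharacter ℂ q)) (a : ZMod q) =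
      χ₁ (a : ZMod q) * (Nat.card H : ℂ) *
        ∑ h ∈ Finset.univ.filter (fun h : (ZMod q)ˣ => ∀ χ ∈ H, χ (h : ZMod q) = 1),
          χ₁ ((h : ZMod q) * ((a⁻¹ : (ZMod q)ˣ) : ZMod q)) *
            e ((((h : ZMod q) * ((a⁻¹ : (ZMod q)ˣ) : ZMod q)).val : ℝ) / q) := by
  classical
  simp only [gaussSum', Finset.sum_mul]
  rw [Finset.sum_comm]
  have step1 : ∀ b : ZMod q, ¬ IsUnit b →
      (∑ χ : H, (χ₁ * (χ : DirichletCharacter ℂ q)) b * e ((b.val : ℝ) / q) *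
        (χ₁ * (χ : DirichletCharacter ℂ q)) (a : ZMod q)) = 0 := by
    intro b hb
    apply Finset.sum_eq_zero
    intro χ _
    rw [MulChar.map_nonunit _ hb, zero_mul, zero_mul]
  rw [sum_eq_sum_units _ step1]
  rw [← Fintype.sum_equiv (Equiv.mulRight a⁻¹)
      (fun h : (ZMod q)ˣ => ∑ χ : H,
        (χ₁ * (χ : DirichletCharacter ℂ q)) ((h * a⁻¹ : (ZMod q)ˣ) : ZMod q) *
          e ((((h * a⁻¹ : (ZMod q)ˣ) : ZMod q).val : ℝ) / q) *
          (χ₁ * (χ : DirichletCharacter ℂ q)) (a : ZMod q))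
      _ (fun h => rfl)]
  have step2 : ∀ h : (ZMod q)ˣ,
      (∑ χ : H, (χ₁ * (χ : DirichletCharacter ℂ q)) ((h * a⁻¹ : (ZMod q)ˣ) : ZMod q) *
          e ((((h * a⁻¹ : (ZMod q)ˣ) : ZMod q).val : ℝ) / q) *
          (χ₁ * (χ : DirichletCharacter ℂ q)) (a : ZMod q)) =
      (if ∀ χ ∈ H, χ (h : ZMod q) = 1 then
        χ₁ (a : ZMod q) * (Nat.card H : ℂ) *
          (χ₁ ((h : ZMod q) * ((a⁻¹ : (ZMod q)ˣ) : ZMod q)) *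
            e ((((h : ZMod q) * ((a⁻¹ : (ZMod q)ˣ) : ZMod q)).val : ℝ) / q)) else 0) := by
    intro h
    have hcoe : ((h * a⁻¹ : (ZMod q)ˣ) : ZMod q) = (h : ZMod q) * ((a⁻¹ : (ZMod q)ˣ) : ZMod q) :=
      Units.val_mul _ _
    have hmul : ∀ χ : DirichletCharacter ℂ q,
        χ ((h * a⁻¹ : (ZMod q)ˣ) : ZMod q) * χ (a : ZMod q) = χ (h : ZMod q) := by
      intro χ
      rw [← map_mul]
      congr 1
      rw [hcoe, mul_assoc, ← Units.val_mul, inv_mul_cancel, Units.val_one, mul_one]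
    have expand : ∀ χ : H,
        (χ₁ * (χ : DirichletCharacter ℂ q)) ((h * a⁻¹ : (ZMod q)ˣ) : ZMod q) *
          e ((((h * a⁻¹ : (ZMod q)ˣ) : ZMod q).val : ℝ) / q) *
          (χ₁ * (χ : DirichletCharacter ℂ q)) (a : ZMod q) =
        (χ₁ ((h * a⁻¹ : (ZMod q)ˣ) : ZMod q) * χ₁ (a : ZMod q) *
          e ((((h * a⁻¹ : (ZMod q)ˣ) : ZMod q).val : ℝ) / q)) *
          (χ : DirichletCharacter ℂ q) (h : ZMod q) := by
      intro χ
      rw [← hmul (χ : DirichletCharacter ℂ q)]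
      simp only [MulChar.mul_apply]
      ring
    rw [Finset.sum_congr rfl (fun χ _ => expand χ), ← Finset.mul_sum,
      sum_subgroup_eval q H h]
    split_ifs with hk
    · rw [hcoe]
      ring
    · rw [mul_zero]
  rw [Finset.sum_congr rfl (fun h _ => step2 h), Finset.sum_ite, Finset.sum_const_zero,
    add_zero, ← Finset.mul_sum]
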